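/- Let X be a Fano manifold with c_X := max{codim N₁(D,X) : D prime divisor}. Let D ⊂ X be a prime divisor with codim N₁(D,X) = c_X, and let E₁,…,E_s ⊂ X (s ≥ 2) be pairwise disjoint prime divisors such that for every i: D∩E_i ≠ ∅, D ≠ E_i, and codim N₁(D∩E_i,X) ≤ c_X + 1. Then codim N₁(D∩E_i,X) = c_X + 1 for every i, and N₁(D∩E_i,X) = N₁(D,X) ∩ E_j^⊥ for every i ≠ j. If moreover s ≥ 3, then there is a single linear subspace L ⊂ N₁(X) of codimension c_X + 1 with L = N₁(D∩E_i,X) = N₁(D,X) ∩ E_i^⊥ for all i = 1,…,s. -/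
import Mathlib


noncomputable section

/-- An abstract projective manifold `X` together with its space `N₁` of real 1-cycles
modulo numerical equivalence, curves and prime divisors (as subsets of `X`),
intersection numbers of divisors with curve classes, and the basic geometric facts
relating them. -/
structure SetVariety : Type 1 where
  /-- the points of the projective manifold `X` -/
  X : Type
  [top : TopologicalSpace X]
  /-- `N₁(X)`: real 1-cycles modulo numerical equivalence -/
  N₁ : Type
  [grp : AddCommGroup N₁]
  [mod : Module ℝ N₁]
  [fd : FiniteDimensional ℝ N₁]
  /-- `X` is a Fano manifold -/
  IsFano : Prop
  /-- the dimension of `X` -/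
  dim : ℕ
  /-- `C` is an irreducible curve in `X` -/
  IsCurve : Set X → Prop
  /-- numerical class of a curve in `N₁(X)` -/
  cls : Set X → N₁
  /-- `D` is a prime divisor in `X` -/
  IsPrimeDivisor : Set X → Prop
  /-- `D` is a smooth prime divisor -/
  IsSmoothDiv : Set X → Prop
  /-- intersection with the divisor `D`, as a linear functional on `N₁(X)`
  (the class of `D` in `N¹(X)`) -/
  deg : Set X → Module.Dual ℝ N₁
  /-- `E` is a smooth `ℙ¹`-bundle over some base, and `f` is one of its fibers -/
  IsP1BundleWithFiber : Set X → Set X → Prop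
  /-- a fiber of a `ℙ¹`-bundle divisor is a curve contained in it -/
  curve_of_fiber : ∀ {E f : Set X}, IsP1BundleWithFiber E f → IsCurve f ∧ f ⊆ E
  /-- through every point of a `ℙ¹`-bundle divisor there is a fiber, numerically
  equivalent to the given one -/
  fiber_through : ∀ {E f : Set X}, IsP1BundleWithFiber E f → ∀ x ∈ E,
      ∃ f' : Set X, IsCurve f' ∧ f' ⊆ E ∧ x ∈ f' ∧ cls f' = cls f
  /-- a divisor disjoint from a curve meets it in degree zero -/
  deg_disjoint : ∀ {D C : Set X}, IsPrimeDivisor D → IsCurve C → C ∩ D = ∅ →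
      deg D (cls C) = 0
  /-- a curve not contained in a prime divisor meets it nonnegatively -/
  deg_nonneg : ∀ {D C : Set X}, IsPrimeDivisor D → IsCurve C → ¬ C ⊆ D →
      0 ≤ deg D (cls C)
  /-- a curve meeting, but not contained in, a prime divisor meets it positively -/
  deg_pos_of_meets : ∀ {D C : Set X}, IsPrimeDivisor D → IsCurve C → ¬ C ⊆ D →
      (C ∩ D).Nonempty → 0 < deg D (cls C)
  /-- distinct prime divisors: neither contains the other -/
  not_subset_of_ne : ∀ {D D' : Set X}, IsPrimeDivisor D → IsPrimeDivisor D' →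
      D ≠ D' → ¬ D ⊆ D'
  /-- if two distinct prime divisors meet, there is a curve in the first meeting the
  second positively -/
  exists_curve_pos : ∀ {D E : Set X}, IsPrimeDivisor D → IsPrimeDivisor E →
      D ≠ E → (D ∩ E).Nonempty → ∃ C : Set X, IsCurve C ∧ C ⊆ D ∧ 0 < deg E (cls C)

attribute [instance] SetVariety.top SetVariety.grp SetVariety.mod SetVariety.fd

namespace SetVariety

variable (V : SetVariety)

/-- `N₁(Z,X)`: the subspace of `N₁(X)` spanned by classes of curves contained in `Z`. -/
def n1 (Z : Set V.X) : Submodule ℝ V.N₁ :=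
  Submodule.span ℝ {v : V.N₁ | ∃ C : Set V.X, V.IsCurve C ∧ C ⊆ Z ∧ V.cls C = v}

/-- `codim N₁(Z,X)` in `N₁(X)`. -/
def codim (Z : Set V.X) : ℕ :=
  Module.finrank ℝ V.N₁ - Module.finrank ℝ ↥(V.n1 Z)

end SetVariety

open Module in
lemma aux_inf_ker {N : Type} [AddCommGroup N] [Module ℝ N] [FiniteDimensional ℝ N]
    (p : Submodule ℝ N) (φ : Module.Dual ℝ N) (v : N) (hv : v ∈ p) (hφv : φ v ≠ 0) :
    finrank ℝ ↥(p ⊓ LinearMap.ker φ) + 1 = finrank ℝ ↥p := by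
  have hlt : p ⊓ LinearMap.ker φ < p := by
    refine lt_of_le_of_ne inf_le_left (fun h => hφv ?_)
    have : v ∈ p ⊓ LinearMap.ker φ := by rw [h]; exact hv
    exact this.2
  have h1 : finrank ℝ ↥(p ⊓ LinearMap.ker φ) < finrank ℝ ↥p :=
    Submodule.finrank_lt_finrank_of_lt hlt
  have h2 : finrank ℝ ↥(p ⊔ LinearMap.ker φ) + finrank ℝ ↥(p ⊓ LinearMap.ker φ)
      = finrank ℝ ↥p + finrank ℝ ↥(LinearMap.ker φ) :=
    Submodule.finrank_sup_add_finrank_inf_eq p (LinearMap.ker φ)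
  have h3 : finrank ℝ ↥(LinearMap.range φ) + finrank ℝ ↥(LinearMap.ker φ) = finrank ℝ N :=
    LinearMap.finrank_range_add_finrank_ker φ
  have h4 : finrank ℝ ↥(LinearMap.range φ) ≤ 1 := by
    simpa using Submodule.finrank_le (LinearMap.range φ)
  have h5 : finrank ℝ ↥(p ⊔ LinearMap.ker φ) ≤ finrank ℝ N :=
    Submodule.finrank_le _
  omega

/-- Lemma 3.7, `meno`.
`X` is Fano with invariant `c_X` (here: `cX` together with the hypothesis `hmax` that
it bounds `codim N₁(D',X)` for all prime divisors `D'`). `D` is a prime divisor with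
`codim N₁(D,X) = c_X`, and `E₁,…,E_s` (`s ≥ 2`) are pairwise disjoint prime divisors
with `D ∩ E_i ≠ ∅`, `D ≠ E_i`, and `codim N₁(D∩E_i,X) ≤ c_X + 1`.
Then `codim N₁(D∩E_i,X) = c_X + 1` for all `i`, and
`N₁(D∩E_i,X) = N₁(D,X) ∩ E_j^⊥` for `i ≠ j`; if `s ≥ 3` there is a single subspace
`L` of codimension `c_X + 1` equal to all of them. -/
theorem stmt_5 (V : SetVariety) (hFano : V.IsFano) (cX : ℕ)
    (hmax : ∀ D' : Set V.X, V.IsPrimeDivisor D' → V.codim D' ≤ cX)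
    (D : Set V.X) (hD : V.IsPrimeDivisor D) (hDc : V.codim D = cX)
    (s : ℕ) (hs : 2 ≤ s) (E : Fin s → Set V.X)
    (hE : ∀ i, V.IsPrimeDivisor (E i))
    (hdisj : ∀ i j, i ≠ j → E i ∩ E j = ∅)
    (hmeet : ∀ i, (D ∩ E i).Nonempty)
    (hne : ∀ i, D ≠ E i)
    (hcodim : ∀ i, V.codim (D ∩ E i) ≤ cX + 1) :
    (∀ i, V.codim (D ∩ E i) = cX + 1) ∧
    (∀ i j, i ≠ j → V.n1 (D ∩ E i) = V.n1 D ⊓ LinearMap.ker (V.deg (E j))) ∧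
    (3 ≤ s → ∃ L : Submodule ℝ V.N₁,
      Module.finrank ℝ V.N₁ - Module.finrank ℝ ↥L = cX + 1 ∧
      ∀ i, L = V.n1 (D ∩ E i) ∧ L = V.n1 D ⊓ LinearMap.ker (V.deg (E i))) := by

  classical
  set n := Module.finrank ℝ V.N₁ with hn
  have hmem : ∀ (Z C : Set V.X), V.IsCurve C → C ⊆ Z → V.cls C ∈ V.n1 Z := fun Z C hC hCZ =>
    Submodule.subset_span ⟨C, hC, hCZ, rfl⟩
  have hA : ∀ j, ∃ v ∈ V.n1 D, V.deg (E j) v ≠ 0 := by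
    intro j
    obtain ⟨C, hC, hCD, hpos⟩ := V.exists_curve_pos hD (hE j) (hne j) (hmeet j)
    exact ⟨V.cls C, hmem D C hC hCD, ne_of_gt hpos⟩
  have hkey : ∀ j, Module.finrank ℝ ↥(V.n1 D ⊓ LinearMap.ker (V.deg (E j))) + 1
      = Module.finrank ℝ ↥(V.n1 D) := by
    intro j; obtain ⟨v, hv, hφ⟩ := hA j
    exact aux_inf_ker _ _ v hv hφ
  have hB : ∀ i j, i ≠ j → V.n1 (D ∩ E i) ≤ V.n1 D ⊓ LinearMap.ker (V.deg (E j)) := by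
    intro i j hij
    apply Submodule.span_le.mpr
    rintro v ⟨C, hC, hCsub, rfl⟩
    refine ⟨hmem D C hC (hCsub.trans Set.inter_subset_left), ?_⟩
    have hCE : C ∩ E j = ∅ := by
      apply Set.eq_empty_of_subset_empty
      calc C ∩ E j ⊆ E i ∩ E j :=
            Set.inter_subset_inter_left _ (hCsub.trans Set.inter_subset_right)
        _ = ∅ := hdisj i j hij
    exact V.deg_disjoint (hE j) hC hCE
  have hfD : Module.finrank ℝ ↥(V.n1 D) + cX = n := by
    have h1 : Module.finrank ℝ ↥(V.n1 D) ≤ n := Submodule.finrank_le _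
    have h2 := hDc
    unfold SetVariety.codim at h2
    omega
  have heq : ∀ i j, i ≠ j → V.n1 (D ∩ E i) = V.n1 D ⊓ LinearMap.ker (V.deg (E j)) := by
    intro i j hij
    apply Submodule.eq_of_le_of_finrank_le (hB i j hij)
    have h1 := hcodim i
    unfold SetVariety.codim at h1
    have h2 : Module.finrank ℝ ↥(V.n1 (D ∩ E i))
        ≤ Module.finrank ℝ ↥(V.n1 D ⊓ LinearMap.ker (V.deg (E j))) :=
      Submodule.finrank_mono (hB i j hij)
    have h3 := hkey j
    omega
  have : Nontrivial (Fin s) := Fin.nontrivial_iff_two_le.mpr hs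
  have hcod1 : ∀ i, V.codim (D ∩ E i) = cX + 1 := by
    intro i
    obtain ⟨j, hj⟩ := exists_ne i
    have h1 := heq i j (Ne.symm hj)
    have h2 : Module.finrank ℝ ↥(V.n1 (D ∩ E i))
        = Module.finrank ℝ ↥(V.n1 D ⊓ LinearMap.ker (V.deg (E j))) := by rw [h1]
    have h3 := hkey j
    unfold SetVariety.codim
    omega
  refine ⟨hcod1, heq, fun hs3 => ?_⟩
  have hex : ∀ i j : Fin s, ∃ k, k ≠ i ∧ k ≠ j := by
    intro i j
    by_contra h
    push_neg at h
    have hsub : (Finset.univ : Finset (Fin s)) ⊆ {i, j} := by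
      intro k _
      simp only [Finset.mem_insert, Finset.mem_singleton]
      rcases eq_or_ne k i with h' | h'
      · exact Or.inl h'
      · exact Or.inr (h k h')
    have hc1 := Finset.card_le_card hsub
    have hc2 : ({i, j} : Finset (Fin s)).card ≤ 2 := by
      refine le_trans (Finset.card_insert_le _ _) ?_
      simp
    rw [Finset.card_univ, Fintype.card_fin] at hc1
    omega
  set i0 : Fin s := ⟨0, by omega⟩ with hi0
  have hall : ∀ i, V.n1 (D ∩ E i) = V.n1 (D ∩ E i0) := by
    intro i
    obtain ⟨k, hk1, hk2⟩ := hex i i0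
    rw [heq i k (Ne.symm hk1), ← heq i0 k (Ne.symm hk2)]
  refine ⟨V.n1 (D ∩ E i0), hcod1 i0, fun i => ⟨(hall i).symm, ?_⟩⟩
  obtain ⟨j, hj1, hj2⟩ := hex i i0
  rw [← heq j i hj1, hall j]
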